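/- Let G act by isometries on a metric space X, discontinuously and cocompactly. Then there are only finitely many conjugacy classes of maximal isotropy subgroups: the set of subgroups of G that are maximal (under inclusion) among nontrivial point-stabilizers, taken up to conjugacy in G, is finite. -/

import Mathlib

open Pointwise

/-- `H` is a maximal isotropy subgroup of the action of `G` on `X`: it is the stabilizer
of some point, it is nontrivial, and it is not properly contained in any other
nontrivial point-stabilizer. -/
def IsMaximalIsotropy (G X : Type*) [Group G] [MulAction G X] (H : Subgroup G) : Prop :=
  (∃ x : X, H = MulAction.stabilizer G x) ∧ H ≠ ⊥ ∧
    ∀ x : X, MulAction.stabilizer G x ≠ ⊥ → H ≤ MulAction.stabilizer G x →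
      H = MulAction.stabilizer G x

/-- A discontinuous, cocompact isometric action has only finitely many
conjugacy classes of maximal isotropy subgroups. -/
theorem finitely_many_conjugacy_classes_of_maximal_isotropy
    (G X : Type*) [Group G] [MetricSpace X] [MulAction G X] [IsIsometricSMul G X]
    (hdisc : ∀ x : X, ∃ ε > (0 : ℝ), ∀ g : G, g • x ≠ x → ε < dist x (g • x))
    (K : Set X) (hK : IsCompact K) (hcov : ∀ y : X, ∃ g : G, y ∈ g • K) :
    ∃ S : Finset (Subgroup G), ∀ H : Subgroup G, IsMaximalIsotropy G X H →
      ∃ H' ∈ S, ∃ g : G, H = Subgroup.map (MulAut.conj g).toMonoidHom H' := by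
  classical
  choose ε hεpos hε using hdisc
  obtain ⟨t, htK, hcover⟩ := hK.elim_nhds_subcover (fun x => Metric.ball x (ε x / 2))
    (fun x _ => Metric.ball_mem_nhds x (by linarith [hεpos x]))
  refine ⟨t.image (fun x => MulAction.stabilizer G x), ?_⟩
  rintro H ⟨⟨y, rfl⟩, hbot, hmax⟩
  obtain ⟨g, hy⟩ := hcov y
  obtain ⟨k, hkK, hgk⟩ := hy
  obtain ⟨i, hit, hki⟩ := Set.mem_iUnion₂.mp (hcover hkK)
  have hdik : dist i k < ε i / 2 := by
    rw [Metric.mem_ball] at hki; rw [dist_comm]; exact hki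
  have hsub : MulAction.stabilizer G k ≤ MulAction.stabilizer G i := by
    intro h hh
    rw [MulAction.mem_stabilizer_iff] at hh ⊢
    by_contra hne
    have h1 := hε i h hne
    have h2 : dist i (h • i) ≤ dist i k + dist k (h • i) := dist_triangle _ _ _
    have h3 : dist k (h • i) = dist k i := by
      conv_lhs => rw [← hh]
      rw [dist_smul]
    rw [h3, dist_comm k i] at h2
    linarith
  have hconj : ∀ z : X, MulAction.stabilizer G (g • z)
      = Subgroup.map (MulAut.conj g).toMonoidHom (MulAction.stabilizer G z) :=
    fun z => MulAction.stabilizer_smul_eq_stabilizer_map_conj g z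
  have hinj : Function.Injective (MulAut.conj g).toMonoidHom := (MulAut.conj g).injective
  have hHk : MulAction.stabilizer G y
      = Subgroup.map (MulAut.conj g).toMonoidHom (MulAction.stabilizer G k) := by
    rw [← hgk]; exact hconj k
  have hkbot : MulAction.stabilizer G k ≠ ⊥ := by
    intro hb
    apply hbot
    rw [hHk, hb, Subgroup.map_bot]
  have hibot : MulAction.stabilizer G i ≠ ⊥ := by
    intro hb
    exact hkbot (le_antisymm (hb ▸ hsub) bot_le)
  have hgibot : MulAction.stabilizer G (g • i) ≠ ⊥ := by
    intro hb
    rw [hconj i] at hb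
    exact hibot ((Subgroup.map_eq_bot_iff_of_injective _ hinj).mp hb)
  have hle : MulAction.stabilizer G y ≤ MulAction.stabilizer G (g • i) := by
    rw [hHk, hconj i]
    exact Subgroup.map_mono hsub
  have hfinal := hmax (g • i) hgibot hle
  exact ⟨MulAction.stabilizer G i, Finset.mem_image_of_mem _ hit, g,
    by rw [hfinal, hconj i]⟩
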